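/- Let v have a fixed point q with v'(q) < 1, and for 0 ≤ s1 ≤ s2 < q define π(s1,s2) = ∫_{s1}^{s2} dx/(v(x) - x). Then (1 - v'(q))·π(s1,s2) = ln((q - s1)/(q - s2)) + π_q(s1) - π_q(s2), where π_q(s) = ∫_0^s ∇_q^2 v(x)/(1 - ∇_q v(x)) dx. -/

import Mathlib

open Set intervalIntegral

/-- The tail generating function operator: `∇_a v(s) = (v(s) - v(a))/(s - a)` for `s ≠ a`,
extended by `∇_a v(a) = v'(a)`. -/
noncomputable def nabla (a : ℝ) (v : ℝ → ℝ) : ℝ → ℝ :=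
  fun s => if s = a then deriv v a else (v s - v a) / (s - a)

/-- For a generating function `v` with `v(q) = q`, `v(x) > x` on `[0,q)` and `v'(q) < 1`:
`(1 - v'(q)) ∫_{s1}^{s2} dx/(v(x)-x) = ln((q-s1)/(q-s2)) + π_q(s1) - π_q(s2)`, where
`π_q(s) = ∫_0^s ∇_q² v(x)/(1 - ∇_q v(x)) dx`, for `0 ≤ s1 ≤ s2 < q`. -/
theorem pi_subcritical_decomposition (c : ℕ → ℝ) (v : ℝ → ℝ) (q : ℝ)
    (hc : ∀ k, 0 ≤ c k) (hq0 : 0 < q)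
    (hv : ∀ x ∈ Icc (0 : ℝ) q, HasSum (fun k => c k * x ^ k) (v x))
    (hfix : v q = q) (hgt : ∀ x ∈ Ico (0 : ℝ) q, x < v x)
    (hdq : DifferentiableAt ℝ v q) (hd : deriv v q < 1)
    (s1 s2 : ℝ) (h1 : 0 ≤ s1) (h12 : s1 ≤ s2) (h2 : s2 < q) :
    (1 - deriv v q) * ∫ x in s1..s2, (v x - x)⁻¹ =
      Real.log ((q - s1) / (q - s2)) +
        (∫ x in (0:ℝ)..s1, nabla q (nabla q v) x / (1 - nabla q v x)) -
        ∫ x in (0:ℝ)..s2, nabla q (nabla q v) x / (1 - nabla q v x) := by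
  set D := deriv v q with hD
  -- continuity of v on [0, q]
  have hvq : EqOn v (fun x => ∑' k, c k * x ^ k) (Icc 0 q) := fun x hx => ((hv x hx).tsum_eq).symm
  have hcont : ContinuousOn v (Icc 0 q) := by
    have hC : ContinuousOn (fun x : ℝ => ∑' k, c k * x ^ k) (Icc 0 q) := by
      refine continuousOn_tsum (fun k => (continuousOn_const.mul (continuousOn_id.pow k)))
        (hv q ⟨hq0.le, le_rfl⟩).summable ?_
      intro k x hx
      have habs : ‖c k * x ^ k‖ = c k * x ^ k := by
        rw [Real.norm_eq_abs]
        exact abs_of_nonneg (mul_nonneg (hc k) (pow_nonneg hx.1 k))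
      rw [habs]
      exact mul_le_mul_of_nonneg_left (pow_le_pow_left₀ hx.1 hx.2 k) (hc k)
    exact hC.congr hvq
  have hsub2 : Icc (0:ℝ) s2 ⊆ Ico 0 q := fun x hx => ⟨hx.1, lt_of_le_of_lt hx.2 h2⟩
  have hsubq : Icc (0:ℝ) s2 ⊆ Icc 0 q := fun x hx => ⟨hx.1, (lt_of_le_of_lt hx.2 h2).le⟩
  -- basic pointwise facts on [0, q)
  have hnv : ∀ x ∈ Ico (0:ℝ) q, nabla q v x = (v x - q) / (x - q) := by
    intro x hx
    simp [nabla, ne_of_lt hx.2, hfix]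
  have hone : ∀ x ∈ Ico (0:ℝ) q, 1 - nabla q v x = (v x - x) / (q - x) := by
    intro x hx
    have hxq : x - q ≠ 0 := sub_ne_zero.2 (ne_of_lt hx.2)
    have hqx : q - x ≠ 0 := sub_ne_zero.2 (ne_of_gt hx.2)
    rw [hnv x hx]
    field_simp
    ring
  have hone_pos : ∀ x ∈ Ico (0:ℝ) q, 0 < 1 - nabla q v x := by
    intro x hx
    rw [hone x hx]
    exact div_pos (sub_pos.2 (hgt x hx)) (sub_pos.2 hx.2)
  have hn2 : ∀ x ∈ Ico (0:ℝ) q, nabla q (nabla q v) x = (nabla q v x - D) / (x - q) := by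
    intro x hx
    simp [nabla, ne_of_lt hx.2, hD]
  -- key pointwise identity
  have key : ∀ x ∈ Ico (0:ℝ) q,
      (1 - D) * (v x - x)⁻¹ = (q - x)⁻¹ - nabla q (nabla q v) x / (1 - nabla q v x) := by
    intro x hx
    have hxq : x - q ≠ 0 := sub_ne_zero.2 (ne_of_lt hx.2)
    have hqx : q - x ≠ 0 := sub_ne_zero.2 (ne_of_gt hx.2)
    have hpos : v x - x ≠ 0 := ne_of_gt (sub_pos.2 (hgt x hx))
    rw [hn2 x hx, hone x hx, hnv x hx]
    field_simp
    ring
  -- continuity of the integrands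
  have hcnv : ContinuousOn (nabla q v) (Icc 0 s2) := by
    have hC : ContinuousOn (fun x => (v x - q) / (x - q)) (Icc 0 s2) :=
      ((hcont.mono hsubq).sub continuousOn_const).div
        (continuousOn_id.sub continuousOn_const)
        (fun x hx => sub_ne_zero.2 (ne_of_lt (hsub2 hx).2))
    exact hC.congr (fun x hx => hnv x (hsub2 hx))
  have hcnn : ContinuousOn (nabla q (nabla q v)) (Icc 0 s2) := by
    have hC : ContinuousOn (fun x => (nabla q v x - D) / (x - q)) (Icc 0 s2) :=
      (hcnv.sub continuousOn_const).div (continuousOn_id.sub continuousOn_const)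
        (fun x hx => sub_ne_zero.2 (ne_of_lt (hsub2 hx).2))
    exact hC.congr (fun x hx => hn2 x (hsub2 hx))
  have hch : ContinuousOn (fun x => nabla q (nabla q v) x / (1 - nabla q v x)) (Icc 0 s2) :=
    hcnn.div (continuousOn_const.sub hcnv)
      (fun x hx => ne_of_gt (hone_pos x (hsub2 hx)))
  -- integrability
  have hsub12 : Icc s1 s2 ⊆ Icc (0:ℝ) s2 := fun x hx => ⟨h1.trans hx.1, hx.2⟩
  have hsub01 : Icc (0:ℝ) s1 ⊆ Icc (0:ℝ) s2 := fun x hx => ⟨hx.1, hx.2.trans h12⟩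
  have hint_h12 : IntervalIntegrable
      (fun x => nabla q (nabla q v) x / (1 - nabla q v x)) MeasureTheory.volume s1 s2 := by
    apply ContinuousOn.intervalIntegrable
    rw [uIcc_of_le h12]
    exact hch.mono hsub12
  have hint_h01 : IntervalIntegrable
      (fun x => nabla q (nabla q v) x / (1 - nabla q v x)) MeasureTheory.volume 0 s1 := by
    apply ContinuousOn.intervalIntegrable
    rw [uIcc_of_le h1]
    exact hch.mono hsub01
  have hint_h02 : IntervalIntegrable
      (fun x => nabla q (nabla q v) x / (1 - nabla q v x)) MeasureTheory.volume 0 s2 := by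
    apply ContinuousOn.intervalIntegrable
    rw [uIcc_of_le (h1.trans h12)]
    exact hch
  have hint_inv : IntervalIntegrable (fun x => (q - x)⁻¹) MeasureTheory.volume s1 s2 := by
    apply ContinuousOn.intervalIntegrable
    rw [uIcc_of_le h12]
    exact (continuousOn_const.sub continuousOn_id).inv₀
      (fun x hx => sub_ne_zero.2 (ne_of_gt (lt_of_le_of_lt hx.2 h2)))
  -- the log integral
  have hlog : (∫ x in s1..s2, (q - x)⁻¹) = Real.log ((q - s1) / (q - s2)) := by
    have hcomp := intervalIntegral.integral_comp_sub_left (a := s1) (b := s2)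
      (fun y : ℝ => y⁻¹) q
    rw [hcomp, integral_inv (a := q - s2) (b := q - s1) ?_]
    rw [uIcc_of_le (by linarith : q - s2 ≤ q - s1)]
    intro h0
    have := h0.1
    linarith
  -- main computation
  calc (1 - D) * ∫ x in s1..s2, (v x - x)⁻¹
      = ∫ x in s1..s2, (1 - D) * (v x - x)⁻¹ := (intervalIntegral.integral_const_mul _ _).symm
    _ = ∫ x in s1..s2, ((q - x)⁻¹ - nabla q (nabla q v) x / (1 - nabla q v x)) := by
        apply intervalIntegral.integral_congr
        intro x hx
        rw [uIcc_of_le h12] at hx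
        exact key x ⟨h1.trans hx.1, lt_of_le_of_lt hx.2 h2⟩
    _ = (∫ x in s1..s2, (q - x)⁻¹)
          - ∫ x in s1..s2, nabla q (nabla q v) x / (1 - nabla q v x) :=
        intervalIntegral.integral_sub hint_inv hint_h12
    _ = Real.log ((q - s1) / (q - s2))
          + (∫ x in (0:ℝ)..s1, nabla q (nabla q v) x / (1 - nabla q v x))
          - ∫ x in (0:ℝ)..s2, nabla q (nabla q v) x / (1 - nabla q v x) := by
        rw [hlog, ← integral_interval_sub_left hint_h02 hint_h01]
        ring
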